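/- Let h be any function satisfying max{z₀, 0} < h(t) < t/2 for all t > max{2z₀, 0}. Then for every t > max{2z₀, 0}: P(X + Z > t) − P(Z > t) = p(t) − q(t) + ε₁(t) − ε₂(t), where p(t) := (1/|E X|) ∫_{h(t)}^{t−h(t)} F̄(t−s)·F̄(s) ds, q(t) := (F̄(t)/|E X|) ∫_{h(t)}^∞ (2F̄(s) − F(−s)) ds, ε₁(t) := (1/|E X|)·[ ∫_0^{h(t)} (F̄(t−s) − F̄(t))·F̄(s) ds + ∫_{z₀}^{h(t)} (F̄(t−s) − F̄(t))·F̄(s) ds + ∫_{−h(t)}^0 (F̄(t) − F̄(t−s))·F(s) ds ], and ε₂(t) := (1/|E X|) ∫_{−∞}^{−h(t)} F̄(t−s)·F(s) ds. -/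

import Mathlib

open MeasureTheory ProbabilityTheory Filter Set
open scoped ENNReal

namespace Stmt3Aux

lemma measurePreserving_const_sub (t : ℝ) :
    MeasurePreserving (fun s : ℝ => t - s) volume volume := by
  have h : (fun s : ℝ => t - s) = (fun s : ℝ => t + s) ∘ (fun s : ℝ => -s) := by
    funext s; simp [sub_eq_add_neg]
  rw [h]
  exact (measurePreserving_add_left volume t).comp (Measure.measurePreserving_neg _)

lemma emb_const_sub (t : ℝ) : MeasurableEmbedding (fun s : ℝ => t - s) :=
  (Homeomorph.subLeft t).measurableEmbedding

lemma integral_reflect (t : ℝ) (g : ℝ → ℝ) (S : Set ℝ) :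
    ∫ u in S, g u = ∫ x in (fun x : ℝ => t - x) ⁻¹' S, g (t - x) := by
  have h := (emb_const_sub t).setIntegral_map (μ := volume) g S
  rw [(measurePreserving_const_sub t).map_eq] at h
  exact h

lemma integrableOn_reflect {g : ℝ → ℝ} {S : Set ℝ} (t : ℝ) (hg : IntegrableOn g S) :
    IntegrableOn (fun x => g (t - x)) ((fun x : ℝ => t - x) ⁻¹' S) := by
  have h := ((emb_const_sub t).integrableOn_map_iff (f := g) (μ := volume) (s := S))
  rw [(measurePreserving_const_sub t).map_eq] at h
  exact h.mp hg

lemma split_Ioi {g : ℝ → ℝ} {u v : ℝ} (huv : u ≤ v) (hg : IntegrableOn g (Ioi u)) :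
    ∫ s in Ioi u, g s = (∫ s in Ioc u v, g s) + ∫ s in Ioi v, g s := by
  rw [← Ioc_union_Ioi_eq_Ioi huv] at hg ⊢
  rw [setIntegral_union (Ioc_disjoint_Ioi le_rfl) measurableSet_Ioi
    (hg.mono_set subset_union_left) (hg.mono_set subset_union_right)]

lemma split_Iio {g : ℝ → ℝ} {u v : ℝ} (huv : u ≤ v) (hg : IntegrableOn g (Iio v)) :
    ∫ s in Iio v, g s = (∫ s in Iio u, g s) + ∫ s in Ico u v, g s := by
  rw [← Iio_union_Ico_eq_Iio huv] at hg ⊢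
  rw [setIntegral_union ((Iio_disjoint_Ici le_rfl).mono_right Ico_subset_Ici_self)
    measurableSet_Ico (hg.mono_set subset_union_left) (hg.mono_set subset_union_right)]

lemma mul_bdd {f g : ℝ → ℝ} {S : Set ℝ} (hf : IntegrableOn f S) (hfm : Measurable f)
    (hgm : Measurable g) (hg1 : ∀ x, |g x| ≤ 1) :
    IntegrableOn (fun x => f x * g x) S := by
  refine hf.abs.mono' ((hfm.mul hgm).aestronglyMeasurable) (ae_of_all _ fun x => ?_)
  rw [Real.norm_eq_abs, abs_mul]
  calc |f x| * |g x| ≤ |f x| * 1 := mul_le_mul_of_nonneg_left (hg1 x) (abs_nonneg _)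
    _ = |f x| := mul_one _

lemma bdd_mul' {f g : ℝ → ℝ} {S : Set ℝ} (hf : IntegrableOn f S) (hfm : Measurable f)
    (hgm : Measurable g) (hg1 : ∀ x, |g x| ≤ 1) :
    IntegrableOn (fun x => g x * f x) S := by
  exact (mul_bdd hf hfm hgm hg1).congr (ae_of_all _ fun x => mul_comm _ _)

end Stmt3Aux

open Stmt3Aux

set_option maxHeartbeats 1000000 in
/-- decomposition, Lemma 5.1 of the paper.
For a random variable `X` with finite, negative mean and `Z` independent of `X`
with the residual-life distribution of `X`, and any function `h` with
`max{z₀,0} < h(t) < t/2` for `t > max{2z₀,0}`, the difference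
`P(X+Z>t) − P(Z>t)` decomposes as `p(t) − q(t) + ε₁(t) − ε₂(t)`. -/
theorem stmt3
    {Ω : Type*} [MeasurableSpace Ω] (P : Measure Ω) [IsProbabilityMeasure P]
    (X Z : Ω → ℝ) (hXm : Measurable X) (hZm : Measurable Z)
    (hXint : Integrable X P) (hXmean : ∫ ω, X ω ∂P < 0)
    (Fbar F : ℝ → ℝ)
    (hFbar : ∀ t, Fbar t = (P {ω | X ω > t}).toReal)
    (hF : ∀ t, F t = (P {ω | X ω ≤ t}).toReal)
    (hindep : IndepFun X Z P)
    (hZlaw : ∀ t : ℝ, (P {ω | Z ω > t}).toReal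
        = min 1 ((1 / |∫ ω, X ω ∂P|) * ∫ s in Set.Ioi t, Fbar s))
    (z0 : ℝ) (hz0 : z0 = sInf {t : ℝ | P {ω | Z ω > t} < 1})
    (h : ℝ → ℝ) (hh : ∀ t > max (2 * z0) 0, max z0 0 < h t ∧ h t < t / 2)
    (p q e1 e2 : ℝ → ℝ)
    (hp : ∀ t, p t = (1 / |∫ ω, X ω ∂P|)
        * ∫ s in (h t)..(t - h t), Fbar (t - s) * Fbar s)
    (hq : ∀ t, q t = (Fbar t / |∫ ω, X ω ∂P|)
        * ∫ s in Set.Ioi (h t), (2 * Fbar s - F (-s)))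
    (he1 : ∀ t, e1 t = (1 / |∫ ω, X ω ∂P|) *
        ((∫ s in (0:ℝ)..(h t), (Fbar (t - s) - Fbar t) * Fbar s)
          + (∫ s in z0..(h t), (Fbar (t - s) - Fbar t) * Fbar s)
          + ∫ s in (-(h t))..(0:ℝ), (Fbar t - Fbar (t - s)) * F s))
    (he2 : ∀ t, e2 t = (1 / |∫ ω, X ω ∂P|)
        * ∫ s in Set.Iio (-(h t)), Fbar (t - s) * F s) :
    ∀ t > max (2 * z0) 0,
      (P {ω | X ω + Z ω > t}).toReal - (P {ω | Z ω > t}).toReal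
        = p t - q t + e1 t - e2 t := by
  intro t ht
  -- notation
  set EX := ∫ ω, X ω ∂P with hEXdef
  set a := |EX| with hadef
  have haEX : a = -EX := abs_of_neg hXmean
  have ha0 : (0:ℝ) < a := abs_pos.mpr (ne_of_lt hXmean)
  -- basic properties of Fbar and F
  have hFbar_nonneg : ∀ s, 0 ≤ Fbar s := fun s => (hFbar s) ▸ ENNReal.toReal_nonneg
  have hF_nonneg : ∀ s, 0 ≤ F s := fun s => (hF s) ▸ ENNReal.toReal_nonneg
  have htoReal_le_one : ∀ A : Set Ω, (P A).toReal ≤ 1 := by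
    intro A
    have h1 : P A ≤ 1 := prob_le_one
    simpa using ENNReal.toReal_mono ENNReal.one_ne_top h1
  have hFbar_le1 : ∀ s, Fbar s ≤ 1 := fun s => (hFbar s) ▸ htoReal_le_one _
  have hF_le1 : ∀ s, F s ≤ 1 := fun s => (hF s) ▸ htoReal_le_one _
  have hFbar_anti : Antitone Fbar := by
    intro u v huv
    rw [hFbar u, hFbar v]
    exact ENNReal.toReal_mono (measure_ne_top P _)
      (measure_mono (fun ω hw => lt_of_le_of_lt huv hw))
  have hF_mono : Monotone F := by
    intro u v huv
    rw [hF u, hF v]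
    exact ENNReal.toReal_mono (measure_ne_top P _)
      (measure_mono (fun ω hw => le_trans hw huv))
  have hFbar_meas : Measurable Fbar := hFbar_anti.measurable
  have hF_meas : Measurable F := hF_mono.measurable
  have hFbar_abs1 : ∀ s, |Fbar s| ≤ 1 := fun s => by
    rw [abs_of_nonneg (hFbar_nonneg s)]; exact hFbar_le1 s
  have hF_abs1 : ∀ s, |F s| ≤ 1 := fun s => by
    rw [abs_of_nonneg (hF_nonneg s)]; exact hF_le1 s
  have pbdd : ∀ (f g : ℝ → ℝ), (∀ x, |f x| ≤ 1) → (∀ x, |g x| ≤ 1) →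
      ∀ x, |f x * g x| ≤ 1 := by
    intro f g hf hg x
    rw [abs_mul]
    calc |f x| * |g x| ≤ 1 * 1 := mul_le_mul (hf x) (hg x) (abs_nonneg _) zero_le_one
      _ = 1 := one_mul 1
  have hsum : ∀ s, Fbar s + F s = 1 := by
    intro s
    have hc : {ω | X ω ≤ s} = {ω | X ω > s}ᶜ := by
      ext ω; simp [not_lt]
    have := measure_add_measure_compl (μ := P) (s := {ω | X ω > s})
      (measurableSet_lt measurable_const hXm)
    rw [hFbar, hF, hc, ← ENNReal.toReal_add (measure_ne_top P _) (measure_ne_top P _), this]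
    simp
  -- integrability of Fbar on right half-lines
  have ibdd : ∀ (g : ℝ → ℝ), Measurable g → (∀ x, |g x| ≤ 1) →
      ∀ u v : ℝ, IntegrableOn g (Ioc u v) := by
    intro g hgm hg1 u v
    refine Integrable.mono' (g := fun _ => (1:ℝ)) ?_ hgm.aestronglyMeasurable
      (ae_of_all _ fun x => by rw [Real.norm_eq_abs]; exact hg1 x)
    exact integrableOn_const measure_Ioc_lt_top.ne
  have hsetFbar : ∀ s : ℝ, 0 < s → {ω | s < max (X ω) 0} = {ω | X ω > s} := by
    intro s hs; ext ω
    simp only [mem_setOf_eq, lt_max_iff]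
    constructor
    · rintro (h0 | h0)
      · exact h0
      · exact absurd h0 (not_lt.mpr (le_of_lt hs))
    · exact Or.inl
  have hsetF : ∀ s : ℝ, 0 < s → {ω | s ≤ max (-X ω) 0} = {ω | X ω ≤ -s} := by
    intro s hs; ext ω
    simp only [mem_setOf_eq, le_max_iff]
    constructor
    · rintro (h0 | h0)
      · linarith
      · exact absurd h0 (not_le.mpr hs)
    · intro h0
      exact Or.inl (by linarith)
  have i1zero : IntegrableOn Fbar (Ioi (0:ℝ)) := by
    have hkey := lintegral_eq_lintegral_meas_lt P (f := fun ω => max (X ω) 0)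
      (ae_of_all _ fun ω => le_max_right _ _) (hXm.max measurable_const).aemeasurable
    have hfin : (∫⁻ ω, ENNReal.ofReal (max (X ω) 0) ∂P) < ⊤ :=
      hXint.pos_part.lintegral_lt_top
    have hset : ∫⁻ s in Ioi (0:ℝ), P {ω | s < max (X ω) 0}
        = ∫⁻ s in Ioi (0:ℝ), ENNReal.ofReal (Fbar s) := by
      refine setLIntegral_congr_fun measurableSet_Ioi (fun s hs => ?_)
      rw [hsetFbar s hs, hFbar, ENNReal.ofReal_toReal (measure_ne_top P _)]
    refine ⟨hFbar_meas.aestronglyMeasurable, ?_⟩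
    rw [hasFiniteIntegral_iff_ofReal (ae_of_all _ hFbar_nonneg)]
    rw [← hset, ← hkey]
    exact hfin
  have i2zero : IntegrableOn (fun s => F (-s)) (Ioi (0:ℝ)) := by
    have hkey := lintegral_eq_lintegral_meas_le P (f := fun ω => max (-X ω) 0)
      (ae_of_all _ fun ω => le_max_right _ _) ((hXm.neg.max measurable_const)).aemeasurable
    have hfin : (∫⁻ ω, ENNReal.ofReal (max (-X ω) 0) ∂P) < ⊤ :=
      hXint.neg_part.lintegral_lt_top
    have hset : ∫⁻ s in Ioi (0:ℝ), P {ω | s ≤ max (-X ω) 0}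
        = ∫⁻ s in Ioi (0:ℝ), ENNReal.ofReal (F (-s)) := by
      refine setLIntegral_congr_fun measurableSet_Ioi (fun s hs => ?_)
      rw [hsetF s hs, hF, ENNReal.ofReal_toReal (measure_ne_top P _)]
    refine ⟨(hF_meas.comp measurable_neg).aestronglyMeasurable, ?_⟩
    rw [hasFiniteIntegral_iff_ofReal (ae_of_all _ fun s => hF_nonneg (-s))]
    rw [← hset, ← hkey]
    exact hfin
  have i1 : ∀ c : ℝ, IntegrableOn Fbar (Ioi c) := by
    intro c
    have hsub : Ioi c ⊆ Ioc c (max c 0) ∪ Ioi 0 := by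
      intro x hx
      rcases le_or_gt x 0 with h0 | h0
      · exact Or.inl ⟨hx, le_trans h0 (le_max_right _ _)⟩
      · exact Or.inr h0
    exact ((ibdd Fbar hFbar_meas hFbar_abs1 c (max c 0)).union i1zero).mono_set hsub
  have i2 : ∀ c : ℝ, 0 ≤ c → IntegrableOn (fun s => F (-s)) (Ioi c) :=
    fun c hc => i2zero.mono_set (Ioi_subset_Ioi hc)
  -- the mean identity
  have hmean : EX = (∫ s in Ioi (0:ℝ), Fbar s) - ∫ s in Ioi (0:ℝ), F (-s) := by
    have hp1 : ∫ ω, max (X ω) 0 ∂P = ∫ s in Ioi (0:ℝ), Fbar s := by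
      rw [hXint.pos_part.integral_eq_integral_meas_lt
        (ae_of_all _ fun ω => le_max_right _ _)]
      refine setIntegral_congr_fun measurableSet_Ioi (fun s hs => ?_)
      rw [hsetFbar s hs, hFbar, measureReal_def]
    have hp2 : ∫ ω, max (-X ω) 0 ∂P = ∫ s in Ioi (0:ℝ), F (-s) := by
      rw [hXint.neg_part.integral_eq_integral_meas_le
        (ae_of_all _ fun ω => le_max_right _ _)]
      refine setIntegral_congr_fun measurableSet_Ioi (fun s hs => ?_)
      rw [hsetF s hs, hF, measureReal_def]
    rw [← hp1, ← hp2, ← integral_sub hXint.pos_part hXint.neg_part]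
    rw [hEXdef]
    refine integral_congr_ae (ae_of_all _ fun ω => ?_)
    exact (max_zero_sub_max_neg_zero_eq_self (X ω)).symm
  -- the tail integral function
  set φ : ℝ → ℝ := fun c => ∫ s in Ioi c, Fbar s with hφdef
  have hφsplit : ∀ u v : ℝ, u ≤ v → φ u = (∫ s in Ioc u v, Fbar s) + φ v :=
    fun u v huv => split_Ioi huv (i1 u)
  have hφnonneg : ∀ c, 0 ≤ φ c :=
    fun c => setIntegral_nonneg measurableSet_Ioi (fun x _ => hFbar_nonneg x)
  have hIocnonneg : ∀ u v : ℝ, 0 ≤ ∫ s in Ioc u v, Fbar s :=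
    fun u v => setIntegral_nonneg measurableSet_Ioc (fun x _ => hFbar_nonneg x)
  have hφmono : ∀ u v : ℝ, u ≤ v → φ v ≤ φ u := by
    intro u v huv
    have := hφsplit u v huv
    have h2 := hIocnonneg u v
    linarith
  have hIocle : ∀ u v : ℝ, u ≤ v → (∫ s in Ioc u v, Fbar s) ≤ v - u := by
    intro u v huv
    have h1 : (∫ s in Ioc u v, Fbar s) ≤ ∫ _ in Ioc u v, (1:ℝ) := by
      refine setIntegral_mono_on (ibdd Fbar hFbar_meas hFbar_abs1 u v)
        (integrableOn_const measure_Ioc_lt_top.ne) measurableSet_Ioc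
        (fun x _ => hFbar_le1 x)
    exact (by simpa [Real.volume_Ioc, ENNReal.toReal_ofReal (sub_nonneg.mpr huv)] using h1 : (∫ s in Ioc u v, Fbar s) ≤ v - u ∨ (∫ s in Ioc u v, Fbar s) ≤ 0).elim id
      (fun h0 : (∫ s in Ioc u v, Fbar s) ≤ 0 => h0.trans (sub_nonneg.mpr huv))
  -- identification of z0
  have hPlt : ∀ c : ℝ, (P {ω | Z ω > c} < 1) ↔ φ c < a := by
    intro c
    have h2 : P {ω | Z ω > c} < 1 ↔ (P {ω | Z ω > c}).toReal < 1 := by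
      rw [← ENNReal.toReal_one]
      exact (ENNReal.toReal_lt_toReal (measure_ne_top P _) ENNReal.one_ne_top).symm
    rw [h2, hZlaw c, min_lt_iff]
    constructor
    · rintro (h0 | h0)
      · exact absurd h0 (lt_irrefl 1)
      · rw [one_div, ← div_eq_inv_mul, div_lt_one ha0] at h0
        exact h0
    · intro h0
      refine Or.inr ?_
      rw [one_div, ← div_eq_inv_mul, div_lt_one ha0]
      exact h0
  have hz0' : z0 = sInf {c : ℝ | φ c < a} := by
    rw [hz0]
    congr 1
    exact Set.ext fun c => hPlt c
  have hSne : Set.Nonempty {c : ℝ | φ c < a} := by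
    have hcup : ⋃ n : ℕ, Ioc (0:ℝ) (n:ℝ) = Ioi 0 := by
      ext x
      simp only [mem_iUnion, mem_Ioc, mem_Ioi]
      constructor
      · rintro ⟨n, hx, _⟩; exact hx
      · intro hx; exact ⟨⌈x⌉₊, hx, Nat.le_ceil x⟩
    have hmon : Monotone (fun n : ℕ => Ioc (0:ℝ) (n:ℝ)) :=
      fun m n hmn => Ioc_subset_Ioc le_rfl (Nat.cast_le.mpr hmn)
    have htendsto := tendsto_setIntegral_of_monotone (μ := volume) (f := Fbar)
      (fun n : ℕ => measurableSet_Ioc) hmon (by rw [hcup]; exact i1 0)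
    rw [hcup] at htendsto
    have hev := htendsto.eventually (eventually_gt_nhds (show φ 0 - a < φ 0 by linarith))
    obtain ⟨n, hn⟩ := hev.exists
    have hsp := hφsplit 0 (n:ℝ) (Nat.cast_nonneg n)
    exact ⟨(n:ℝ), by simp only [mem_setOf_eq]; linarith⟩
  set m := ∫ ω, |X ω| ∂P with hmdef
  have hm0 : 0 ≤ m := integral_nonneg fun ω => abs_nonneg _
  have hMar : ∀ s : ℝ, s ≤ -(2*m+1) → 1/2 ≤ Fbar s := by
    intro s hs
    have hs0 : s < 0 := by linarith
    have hpos : 0 < -s := by linarith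
    have h1 : (-s) * (P {ω | -s ≤ |X ω|}).toReal ≤ m :=
      mul_meas_ge_le_integral_of_nonneg (ae_of_all _ fun ω => abs_nonneg _) hXint.abs (-s)
    have h2 : F s ≤ (P {ω | -s ≤ |X ω|}).toReal := by
      rw [hF]
      refine ENNReal.toReal_mono (measure_ne_top P _) (measure_mono fun ω hw => ?_)
      have hw' : X ω ≤ s := hw
      have : -s ≤ -X ω := by linarith
      exact le_trans this (neg_le_abs _)
    have htR : 0 ≤ (P {ω | -s ≤ |X ω|}).toReal := ENNReal.toReal_nonneg
    have h3 : F s ≤ 1/2 := by nlinarith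
    have := hsum s
    linarith
  have hSbdd : BddBelow {c : ℝ | φ c < a} := by
    refine ⟨-(2*m+1) - 2*a, fun c hc => ?_⟩
    by_contra hlt
    push_neg at hlt
    have hcM : c ≤ -(2*m+1) := by linarith
    have hIoc : (1/2) * ((volume (Ioc c (-(2*m+1)))).toReal)
        ≤ ∫ s in Ioc c (-(2*m+1)), Fbar s :=
      setIntegral_ge_of_const_le_real measurableSet_Ioc measure_Ioc_lt_top.ne
        (fun x hx => hMar x hx.2) (ibdd Fbar hFbar_meas hFbar_abs1 _ _)
    rw [Real.volume_Ioc, ENNReal.toReal_ofReal (by linarith)] at hIoc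
    have hsp := hφsplit c (-(2*m+1)) hcM
    have hc' : φ c < a := hc
    nlinarith [hφnonneg (-(2*m+1))]
  have hz0mem : ∀ u : ℝ, u < z0 → a ≤ φ u := by
    intro u hu
    by_contra hlt
    push_neg at hlt
    have : z0 ≤ u := by rw [hz0']; exact csInf_le hSbdd hlt
    linarith
  have hz0lt : ∀ u : ℝ, z0 < u → φ u < a := by
    intro u hu
    rw [hz0'] at hu
    obtain ⟨v, hv, hvu⟩ := (csInf_lt_iff hSbdd hSne).mp hu
    exact lt_of_le_of_lt (hφmono v u (le_of_lt hvu)) hv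
  have hz0a : φ z0 = a := by
    have hle : φ z0 ≤ a := by
      by_contra hgt
      push_neg at hgt
      have hε0 : 0 < (φ z0 - a)/2 := by linarith
      have h1 : φ (z0 + (φ z0 - a)/2) < a := hz0lt _ (by linarith)
      have h2 := hφsplit z0 (z0 + (φ z0 - a)/2) (by linarith)
      have h3 := hIocle z0 (z0 + (φ z0 - a)/2) (by linarith)
      linarith
    have hge : a ≤ φ z0 := by
      by_contra hgt
      push_neg at hgt
      have hε0 : 0 < (a - φ z0)/2 := by linarith
      have h1 : a ≤ φ (z0 - (a - φ z0)/2) := hz0mem _ (by linarith)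
      have h2 := hφsplit (z0 - (a - φ z0)/2) z0 (by linarith)
      have h3 := hIocle (z0 - (a - φ z0)/2) z0 (by linarith)
      linarith
    linarith
  have hφ_ge_of_le : ∀ u : ℝ, u ≤ z0 → a ≤ φ u := by
    intro u hu
    rw [← hz0a]
    exact hφmono u z0 hu
  -- law of Z at points ≥ z0
  have hPZ : ∀ u : ℝ, z0 ≤ u → (P {ω | Z ω > u}).toReal = φ u / a := by
    intro u hu
    have hle : φ u ≤ a := hz0a ▸ hφmono z0 u hu
    rw [hZlaw u, min_eq_right]
    · rw [one_div, inv_mul_eq_div]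
    · rw [one_div, inv_mul_le_iff₀ ha0, mul_one]
      exact hle
  -- the law of X + Z
  have hPXZ : (P {ω | X ω + Z ω > t}).toReal
      = ∫ s in Ioi z0, Fbar (t - s) * Fbar s / a := by
    have hmap : P.map (fun ω => (X ω, Z ω)) = (P.map X).prod (P.map Z) :=
      (indepFun_iff_map_prod_eq_prod_map_map hXm.aemeasurable hZm.aemeasurable).mp hindep
    have hSm : MeasurableSet {pp : ℝ × ℝ | pp.1 + pp.2 > t} :=
      measurableSet_lt measurable_const (measurable_fst.add measurable_snd)
    have hmapX : ∀ u : ℝ, (P.map X) (Ioi u) = ENNReal.ofReal (Fbar u) := by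
      intro u
      rw [Measure.map_apply hXm measurableSet_Ioi]
      have : X ⁻¹' Ioi u = {ω | X ω > u} := rfl
      rw [this, hFbar u, ENNReal.ofReal_toReal (measure_ne_top P _)]
    set f : ℝ → ℝ≥0∞ := (Ioi z0).indicator (fun s => ENNReal.ofReal (Fbar s / a)) with hfdef
    have hf_meas : Measurable f :=
      (ENNReal.measurable_ofReal.comp (hFbar_meas.div_const a)).indicator measurableSet_Ioi
    set ν := volume.withDensity f with hνdef
    have hνA : ∀ A : Set ℝ, MeasurableSet A →
        ν A = ENNReal.ofReal (∫ s in Ioi z0 ∩ A, Fbar s / a) := by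
      intro A hA
      rw [hνdef, withDensity_apply _ hA, hfdef]
      rw [lintegral_indicator measurableSet_Ioi]
      rw [Measure.restrict_restrict measurableSet_Ioi]
      rw [← ofReal_integral_eq_lintegral_ofReal
        (((i1 z0).mono_set inter_subset_left).div_const a)
        (ae_of_all _ fun s => div_nonneg (hFbar_nonneg s) (le_of_lt ha0))]
    have hν_Ioi : ∀ u : ℝ, ν (Ioi u) = ENNReal.ofReal (φ (max z0 u) / a) := by
      intro u
      rw [hνA _ measurableSet_Ioi, Ioi_inter_Ioi, integral_div]
    have hμZ_Ioi : ∀ u : ℝ, (P.map Z) (Ioi u) = ENNReal.ofReal (φ (max z0 u) / a) := by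
      intro u
      rw [Measure.map_apply hZm measurableSet_Ioi]
      have hpre : Z ⁻¹' Ioi u = {ω | Z ω > u} := rfl
      rw [hpre, ← ENNReal.ofReal_toReal (measure_ne_top P _), hZlaw u]
      congr 1
      rcases le_total u z0 with hu | hu
      · rw [max_eq_left hu, hz0a, div_self (ne_of_gt ha0), min_eq_left]
        have hge : a ≤ φ u := hφ_ge_of_le u hu
        rw [one_div, ← div_eq_inv_mul]
        rw [le_div_iff₀ ha0, one_mul]
        exact hge
      · rw [max_eq_right hu, min_eq_right, one_div, ← div_eq_inv_mul]
        have hle : φ u ≤ a := hz0a ▸ hφmono z0 u hu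
        rw [one_div, ← div_eq_inv_mul, div_le_one ha0]
        exact hle
    haveI hfin : IsFiniteMeasure ν := by
      constructor
      rw [hνA univ MeasurableSet.univ]
      exact ENNReal.ofReal_lt_top
    have hμZν : P.map Z = ν := by
      haveI : IsProbabilityMeasure (P.map Z) := Measure.isProbabilityMeasure_map hZm.aemeasurable
      have hνuniv : ν univ = 1 := by
        rw [hνA univ MeasurableSet.univ, inter_univ, integral_div]
        have : φ z0 = a := hz0a
        rw [show (∫ s in Ioi z0, Fbar s) = φ z0 from rfl, hz0a, div_self (ne_of_gt ha0)]
        exact ENNReal.ofReal_one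
      refine Measure.ext_of_Iic (P.map Z) ν (fun x => ?_)
      have hIic : Iic x = (Ioi x)ᶜ := compl_Ioi.symm
      rw [hIic, measure_compl measurableSet_Ioi (measure_ne_top _ _),
        measure_compl measurableSet_Ioi (measure_ne_top _ _),
        measure_univ, hνuniv, hμZ_Ioi, hν_Ioi]
    have hgm : Measurable fun z : ℝ => ENNReal.ofReal (Fbar (t - z)) :=
      ENNReal.measurable_ofReal.comp (hFbar_meas.comp (measurable_const.sub measurable_id))
    have hintg : IntegrableOn (fun z => Fbar z / a * Fbar (t - z)) (Ioi z0) :=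
      mul_bdd ((i1 z0).div_const a) (hFbar_meas.div_const a)
        (hFbar_meas.comp (measurable_const.sub measurable_id)) (fun z => hFbar_abs1 _)
    have hset : {ω | X ω + Z ω > t}
        = (fun ω => (X ω, Z ω)) ⁻¹' {pp : ℝ × ℝ | pp.1 + pp.2 > t} := rfl
    rw [hset, ← Measure.map_apply (hXm.prodMk hZm) hSm, hmap, Measure.prod_apply_symm hSm]
    have hpre : ∀ z : ℝ, ((fun x => (x, z)) ⁻¹' {pp : ℝ × ℝ | pp.1 + pp.2 > t})
        = Ioi (t - z) := by
      intro z
      ext x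
      simp only [mem_preimage, mem_setOf_eq, mem_Ioi]
      constructor
      · intro h0; linarith
      · intro h0; linarith
    have hlin : ∫⁻ z, (P.map X) ((fun x => (x, z)) ⁻¹' {pp : ℝ × ℝ | pp.1 + pp.2 > t})
          ∂(P.map Z)
        = ENNReal.ofReal (∫ s in Ioi z0, Fbar (t - s) * Fbar s / a) := by
      calc ∫⁻ z, (P.map X) ((fun x => (x, z)) ⁻¹' {pp : ℝ × ℝ | pp.1 + pp.2 > t}) ∂(P.map Z)
          = ∫⁻ z, ENNReal.ofReal (Fbar (t - z)) ∂ν := by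
            rw [hμZν]
            exact lintegral_congr fun z => by rw [hpre z, hmapX]
        _ = ∫⁻ z, (f * fun z => ENNReal.ofReal (Fbar (t - z))) z ∂volume :=
            lintegral_withDensity_eq_lintegral_mul volume hf_meas hgm
        _ = ∫⁻ z in Ioi z0, ENNReal.ofReal (Fbar z / a * Fbar (t - z)) ∂volume := by
            rw [← lintegral_indicator measurableSet_Ioi]
            refine lintegral_congr fun z => ?_
            simp only [hfdef, Pi.mul_apply, Set.indicator_apply]
            split_ifs with hz
            · rw [← ENNReal.ofReal_mul (div_nonneg (hFbar_nonneg z) (le_of_lt ha0))]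
            · rw [zero_mul]
        _ = ENNReal.ofReal (∫ z in Ioi z0, Fbar z / a * Fbar (t - z)) :=
            (ofReal_integral_eq_lintegral_ofReal hintg
              (ae_of_all _ fun z =>
                mul_nonneg (div_nonneg (hFbar_nonneg z) (le_of_lt ha0)) (hFbar_nonneg _))).symm
        _ = ENNReal.ofReal (∫ s in Ioi z0, Fbar (t - s) * Fbar s / a) := by
            congr 1
            exact integral_congr_ae (ae_of_all _ fun s => by ring)
    rw [hlin, ENNReal.toReal_ofReal]
    exact setIntegral_nonneg measurableSet_Ioi fun s _ =>
      div_nonneg (mul_nonneg (hFbar_nonneg _) (hFbar_nonneg _)) (le_of_lt ha0)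
  -- position facts
  obtain ⟨hh1, hh2⟩ := hh t ht
  set H := h t with hHdef
  have ht0 : (0:ℝ) < t := lt_of_le_of_lt (le_max_right _ _) ht
  have hH0 : (0:ℝ) < H := lt_of_le_of_lt (le_max_right _ _) hh1
  have hz0H : z0 < H := lt_of_le_of_lt (le_max_left _ _) hh1
  have hHt2 : H < t / 2 := hh2
  have hHtH : H ≤ t - H := by linarith
  have hz0t : z0 < t := by linarith
  have hnH0 : -H ≤ (0:ℝ) := by linarith
  -- integrands
  set D : ℝ → ℝ := fun s => Fbar (t - s) with hDdef
  have hD_meas : Measurable D := hFbar_meas.comp (measurable_const.sub measurable_id)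
  have hD_abs1 : ∀ s, |D s| ≤ 1 := fun s => hFbar_abs1 _
  -- integrability facts
  have iDF_Ioi : IntegrableOn (fun s => D s * Fbar s) (Ioi z0) :=
    bdd_mul' (i1 z0) hFbar_meas hD_meas hD_abs1
  have iD_IioH : IntegrableOn D (Iio H) := by
    have h0 := integrableOn_reflect t (i1 (t - H))
    rw [preimage_const_sub_Ioi] at h0
    simpa [hDdef, sub_sub_cancel] using h0
  have iDF_IioH : IntegrableOn (fun s => D s * Fbar s) (Iio H) :=
    mul_bdd iD_IioH hD_meas hFbar_meas hFbar_abs1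
  have iDG_Iio0 : IntegrableOn (fun s => D s * F s) (Iio 0) :=
    mul_bdd (iD_IioH.mono_set (Iio_subset_Iio (le_of_lt hH0))) hD_meas hF_meas hF_abs1
  -- named integrals
  set A := ∫ s in Ioi z0, D s * Fbar s with hAdef
  set c1 := ∫ s in Ioc z0 H, D s * Fbar s with hc1def
  set P' := ∫ s in Ioc H (t - H), D s * Fbar s with hP'def
  set R := ∫ s in Ioi (t - H), D s * Fbar s with hRdef
  set R0 := ∫ s in Iio 0, D s * Fbar s with hR0def
  set c2 := ∫ s in Ioc 0 H, D s * Fbar s with hc2def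
  set W := ∫ s in Iio 0, D s * F s with hWdef
  set E2' := ∫ s in Iio (-H), D s * F s with hE2'def
  set w2 := ∫ s in Ioc (-H) 0, D s * F s with hw2def
  set β := φ H with hβdef
  set αp := φ 0 with hαpdef
  set αm := ∫ s in Ioi (0:ℝ), F (-s) with hαmdef
  set γ := ∫ s in Ioi H, F (-s) with hγdef
  set b1 := ∫ s in Ioc 0 H, Fbar s with hb1def
  set b2 := ∫ s in Ioc z0 H, Fbar s with hb2def
  set b3 := ∫ s in Ioc (-H) 0, F s with hb3def
  -- splitting A
  have hA : A = c1 + P' + R := by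
    rw [hAdef, split_Ioi (le_of_lt hz0H) iDF_Ioi,
      split_Ioi hHtH (iDF_Ioi.mono_set (Ioi_subset_Ioi (le_of_lt hz0H)))]
    ring
  -- reflecting the upper tail
  have hR : R = R0 + c2 := by
    have hrefl : ∫ u in Iio H, Fbar (t - u) * Fbar u
        = ∫ x in Ioi (t - H), Fbar x * Fbar (t - x) := by
      have h0 := integral_reflect t (fun u => Fbar (t - u) * Fbar u) (Iio H)
      rw [preimage_const_sub_Iio] at h0
      simpa [sub_sub_cancel] using h0
    have hcomm : ∫ x in Ioi (t - H), Fbar x * Fbar (t - x) = R := by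
      rw [hRdef]
      exact integral_congr_ae (ae_of_all _ fun x => mul_comm _ _)
    have hsplit : ∫ u in Iio H, D u * Fbar u
        = (∫ u in Iio 0, D u * Fbar u) + ∫ u in Ico 0 H, D u * Fbar u :=
      split_Iio (le_of_lt hH0) iDF_IioH
    have hIco : ∫ u in Ico 0 H, D u * Fbar u = c2 := by
      rw [hc2def, integral_Ico_eq_integral_Ioo, integral_Ioc_eq_integral_Ioo]
    rw [← hcomm, ← hrefl] at *
    rw [show (∫ u in Iio H, Fbar (t - u) * Fbar u) = ∫ u in Iio H, D u * Fbar u from rfl,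
      hsplit, hIco]
  -- reflecting B
  have hB : φ t = R0 + W := by
    have hrefl : ∫ u in Ioi t, Fbar u = ∫ x in Iio 0, Fbar (t - x) := by
      have h0 := integral_reflect t Fbar (Ioi t)
      rw [preimage_const_sub_Ioi, sub_self] at h0
      exact h0
    have hsplit2 : ∫ x in Iio 0, D x = ∫ x in Iio 0, (D x * Fbar x + D x * F x) := by
      refine integral_congr_ae (ae_of_all _ fun x => ?_)
      show D x = D x * Fbar x + D x * F x
      rw [← mul_add, hsum, mul_one]
    rw [hφdef]
    show (∫ u in Ioi t, Fbar u) = R0 + W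
    rw [hrefl]
    show (∫ x in Iio 0, D x) = R0 + W
    rw [hsplit2, integral_add (iDF_IioH.mono_set (Iio_subset_Iio (le_of_lt hH0))) iDG_Iio0]
  -- splitting W
  have hW : W = E2' + w2 := by
    have hs := split_Iio hnH0 iDG_Iio0
    rw [hWdef, hs, hE2'def, hw2def, integral_Ico_eq_integral_Ioo, integral_Ioc_eq_integral_Ioo]
  -- b-identities
  have hb2e : b2 = a - β := by
    have := hφsplit z0 H (le_of_lt hz0H)
    rw [hz0a] at this
    rw [hb2def]; linarith
  have hb1e : b1 = αp - β := by
    have := hφsplit 0 H (le_of_lt hH0)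
    rw [hb1def, hαpdef, hβdef]; linarith
  have hb3e : b3 = αm - γ := by
    have hrefl : ∫ u in Ioc (-H) 0, F u = ∫ x in Ico 0 H, F (-x) := by
      have h0 := integral_reflect 0 F (Ioc (-H) 0)
      rw [preimage_const_sub_Ioc] at h0
      simpa [zero_sub, sub_neg_eq_add] using h0
    have hsp := split_Ioi (le_of_lt hH0) (i2 0 le_rfl)
    rw [hb3def, hrefl, integral_Ico_eq_integral_Ioo, ← integral_Ioc_eq_integral_Ioo]
    rw [hαmdef, hγdef]
    linarith [hsp]
  have hmean2 : αp - αm = -a := by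
    rw [hαpdef, hαmdef]
    have := hmean
    rw [haEX] at *
    linarith [hmean]
  -- q integrand
  have hQ : ∫ s in Ioi H, (2 * Fbar s - F (-s)) = 2 * β - γ := by
    rw [integral_sub ((i1 H).const_mul 2) (i2 H (le_of_lt hH0)), integral_const_mul]
  -- e1 expansions
  have hE11 : ∫ s in Ioc 0 H, (Fbar (t - s) - Fbar t) * Fbar s = c2 - Fbar t * b1 := by
    have : ∀ s : ℝ, (Fbar (t - s) - Fbar t) * Fbar s = D s * Fbar s - Fbar t * Fbar s :=
      fun s => by rw [hDdef]; ring
    simp only [this]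
    rw [integral_sub (ibdd (fun s => D s * Fbar s) (hD_meas.mul hFbar_meas)
        (pbdd _ _ hD_abs1 hFbar_abs1) 0 H)
      (ibdd (fun s => Fbar t * Fbar s) (measurable_const.mul hFbar_meas)
        (pbdd _ _ (fun _ => hFbar_abs1 t) hFbar_abs1) 0 H),
      integral_const_mul]
  have hE12 : ∫ s in Ioc z0 H, (Fbar (t - s) - Fbar t) * Fbar s = c1 - Fbar t * b2 := by
    have : ∀ s : ℝ, (Fbar (t - s) - Fbar t) * Fbar s = D s * Fbar s - Fbar t * Fbar s :=
      fun s => by rw [hDdef]; ring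
    simp only [this]
    rw [integral_sub (ibdd (fun s => D s * Fbar s) (hD_meas.mul hFbar_meas)
        (pbdd _ _ hD_abs1 hFbar_abs1) z0 H)
      (ibdd (fun s => Fbar t * Fbar s) (measurable_const.mul hFbar_meas)
        (pbdd _ _ (fun _ => hFbar_abs1 t) hFbar_abs1) z0 H),
      integral_const_mul]
  have hE13 : ∫ s in Ioc (-H) 0, (Fbar t - Fbar (t - s)) * F s = Fbar t * b3 - w2 := by
    have : ∀ s : ℝ, (Fbar t - Fbar (t - s)) * F s = Fbar t * F s - D s * F s :=
      fun s => by rw [hDdef]; ring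
    simp only [this]
    rw [integral_sub (ibdd (fun s => Fbar t * F s) (measurable_const.mul hF_meas)
        (pbdd _ _ (fun _ => hFbar_abs1 t) hF_abs1) (-H) 0)
      (ibdd (fun s => D s * F s) (hD_meas.mul hF_meas)
        (pbdd _ _ hD_abs1 hF_abs1) (-H) 0),
      integral_const_mul]
  -- the key algebraic identity
  have key : A - φ t = P' - Fbar t * (2 * β - γ)
      + ((c2 - Fbar t * b1) + (c1 - Fbar t * b2) + (Fbar t * b3 - w2)) - E2' := by
    linear_combination hA + hR - hB - hW + Fbar t * hb1e + Fbar t * hb2e - Fbar t * hb3e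
      + Fbar t * hmean2
  -- final assembly
  have hLHS1 : (P {ω | X ω + Z ω > t}).toReal = A / a := by
    rw [hPXZ, hAdef, ← integral_div]
  have hLHS2 : (P {ω | Z ω > t}).toReal = φ t / a := hPZ t (le_of_lt hz0t)
  rw [hLHS1, hLHS2, hp t, hq t, he1 t, he2 t, ← hHdef]
  rw [intervalIntegral.integral_of_le hHtH,
      intervalIntegral.integral_of_le (le_of_lt hH0),
      intervalIntegral.integral_of_le (le_of_lt hz0H),
      intervalIntegral.integral_of_le hnH0]
  rw [hQ, hE11, hE12, hE13]
  rw [show (∫ s in Ioc H (t - H), Fbar (t - s) * Fbar s) = P' from rfl,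
      show (∫ s in Iio (-H), Fbar (t - s) * F s) = E2' from rfl]
  field_simp
  linear_combination key
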